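/- For every bounded semilinear language L ∈ BSL there exists an ε-constrained automaton (A, C) with L(A, C) = L that has the constraint-determinism property: for any two accepting paths π₁, π₂ of A with the same label, Φ(π₁) ∈ C if and only if Φ(π₂) ∈ C. -/

import Mathlib

open scoped Classical

noncomputable section

/-! ### Basic word and language notions -/

/-- Number of occurrences of `b` in the list `l`. -/
def countOcc {β : Type} (l : List β) (b : β) : ℕ :=
  (l.filter fun s => decide (s = b)).length

/-- `wpow w k` is the word `w` concatenated with itself `k` times. -/
def wpow {β : Type} (w : List β) : ℕ → List β
  | 0 => []
  | k + 1 => w ++ wpow w k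

/-- The word `w₁^{k₁} ⋯ wₙ^{kₙ}`. -/
def socProd {β : Type} {n : ℕ} (w : Fin n → List β) (k : Fin n → ℕ) : List β :=
  (List.ofFn fun i => wpow (w i) (k i)).flatten

/-- `w₁, …, wₙ` is a socle of `L`: the `wᵢ` are nonempty and `L ⊆ w₁* ⋯ wₙ*`. -/
def IsSocle {β : Type} {n : ℕ} (L : Set (List β)) (w : Fin n → List β) : Prop :=
  (∀ i, w i ≠ []) ∧ ∀ x ∈ L, ∃ k : Fin n → ℕ, x = socProd w k

/-- A language is bounded if it has a socle. -/
def BoundedLang {β : Type} (L : Set (List β)) : Prop :=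
  ∃ (n : ℕ) (w : Fin n → List β), 0 < n ∧ IsSocle L w

/-- The iteration set of `L` w.r.t. the socle `w`. -/
def IterSet {β : Type} {n : ℕ} (L : Set (List β)) (w : Fin n → List β) :
    Set (Fin n → ℕ) :=
  {k | socProd w k ∈ L}

/-- Concatenation of two languages. -/
def catLang {β : Type} (X Y : Set (List β)) : Set (List β) :=
  {w | ∃ x ∈ X, ∃ y ∈ Y, w = x ++ y}

/-- The language `z* = {z^k | k ∈ ℕ}` of powers of a single word. -/
def starWord {β : Type} (z : List β) : Set (List β) :=
  {w | ∃ k : ℕ, w = wpow z k}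

/-- Kleene star of a language. -/
def starLang {β : Type} (K : Set (List β)) : Set (List β) :=
  {w | ∃ l : List (List β), (∀ u ∈ l, u ∈ K) ∧ w = l.flatten}

/-! ### Semilinear sets -/

/-- `C ⊆ ℕ^ι` is linear: `C = c + P*` for a finite `P`. -/
def IsLinearSetN {ι : Type} (C : Set (ι → ℕ)) : Prop :=
  ∃ (c : ι → ℕ) (P : Set (ι → ℕ)), P.Finite ∧
    C = {x | ∃ p ∈ AddSubmonoid.closure P, x = c + p}

/-- `C ⊆ ℕ^ι` is semilinear: a finite union of linear sets. -/
def IsSemilinearSetN {ι : Type} (C : Set (ι → ℕ)) : Prop :=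
  ∃ S : Set (Set (ι → ℕ)), S.Finite ∧ (∀ D ∈ S, IsLinearSetN D) ∧ C = ⋃₀ S

/-- `L` is a bounded semilinear language: it has a socle whose iteration set is
semilinear. -/
def InBSL {β : Type} (L : Set (List β)) : Prop :=
  ∃ (n : ℕ) (w : Fin n → List β), 0 < n ∧ IsSocle L w ∧ IsSemilinearSetN (IterSet L w)

/-! ### Finite automata, paths, runs -/

/-- A (nondeterministic) finite automaton with a single initial state, a set of
final states and a finite set of transitions. -/
structure FinAut (α : Type) where
  σ : Type
  [finσ : Fintype σ]
  init : σ
  accept : Set σ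
  δ : Set (σ × α × σ)
  finδ : δ.Finite

namespace FinAut

variable {α : Type}

/-- The type of transitions of `A`. -/
def Trans (A : FinAut α) : Type := {t : A.σ × α × A.σ // t ∈ A.δ}

def src {A : FinAut α} (t : A.Trans) : A.σ := t.1.1
def lbl {A : FinAut α} (t : A.Trans) : α := t.1.2.1
def tgt {A : FinAut α} (t : A.Trans) : A.σ := t.1.2.2

/-- `A.Steps q π r` holds when `π` is a path from state `q` to state `r`. -/
inductive Steps (A : FinAut α) : A.σ → List A.Trans → A.σ → Prop
  | nil (q : A.σ) : Steps A q [] q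
  | cons {q r : A.σ} {t : A.Trans} {π : List A.Trans} :
      src t = q → Steps A (tgt t) π r → Steps A q (t :: π) r

/-- The set of accepting paths of `A`, as a language over the transition set. -/
def Run (A : FinAut α) : Set (List A.Trans) :=
  {π | ∃ f ∈ A.accept, A.Steps A.init π f}

/-- The language of `A`: labels of accepting paths. -/
def lang (A : FinAut α) : Set (List α) :=
  {w | ∃ π ∈ A.Run, w = π.map lbl}

/-- `A` is deterministic. -/
def Deterministic (A : FinAut α) : Prop :=
  ∀ ⦃p : A.σ⦄ ⦃a : α⦄ ⦃q q' : A.σ⦄, (p, a, q) ∈ A.δ → (p, a, q') ∈ A.δ → q = q'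

/-- The Parikh image of a path: how many times each transition occurs. -/
def pathCount {A : FinAut α} (π : List A.Trans) : A.Trans → ℕ :=
  fun t => countOcc π t

/-- `A` is flat: it consists of a spine of states `q 0, …, q n` (`q 0` initial,
`q n` final, exactly one transition from `q i` to `q (i+1)` given by the label
`sl i`), together with, for at most one pair `lo k ≤ hi k` each, a back-path of
fresh states from `q (hi k)` to `q (lo k)`; the endpoints of distinct
back-paths are not strictly inside one another (no nested loops). -/
def Flat (A : FinAut α) : Prop :=
  ∃ (n : ℕ) (q : Fin (n + 1) → A.σ) (sl : Fin n → α) (m : ℕ)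
    (lo hi : Fin m → Fin (n + 1)) (fresh : Fin m → List A.σ) (bl : Fin m → List α),
    Function.Injective q ∧
    A.init = q 0 ∧
    A.accept = {q (Fin.last n)} ∧
    (∀ k, lo k ≤ hi k) ∧
    (∀ k k', k ≠ k' → (lo k, hi k) ≠ (lo k', hi k')) ∧
    (∀ k k', k ≠ k' →
      ¬(lo k < lo k' ∧ lo k' < hi k) ∧ ¬(lo k < hi k' ∧ hi k' < hi k)) ∧
    (∀ k, (fresh k).Nodup) ∧
    (∀ k i, q i ∉ fresh k) ∧
    (∀ k k', k ≠ k' → ∀ s ∈ fresh k, s ∉ fresh k') ∧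
    (∀ s : A.σ, (∃ i, s = q i) ∨ ∃ k, s ∈ fresh k) ∧
    (∀ k, (bl k).length = (fresh k).length + 1) ∧
    A.δ = {t | (∃ i : Fin n, t = (q i.castSucc, sl i, q i.succ)) ∨
        (∃ (k : Fin m) (j : ℕ) (s s' : A.σ) (a : α),
          (q (hi k) :: (fresh k ++ [q (lo k)]))[j]? = some s ∧
          (bl k)[j]? = some a ∧
          (q (hi k) :: (fresh k ++ [q (lo k)]))[j + 1]? = some s' ∧
          t = (s, a, s'))}

end FinAut

/-! ### ε-automata -/

/-- The language of an ε-automaton (transitions labelled by `Option α`, where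
`none` stands for ε): labels of accepting paths, erasing ε. -/
def epsLang {α : Type} (A : FinAut (Option α)) : Set (List α) :=
  {w | ∃ π ∈ A.Run, w = π.filterMap FinAut.lbl}

/-! ### Constrained automata -/

/-- The language of the constrained automaton `(A, C)`. -/
def CALang {α : Type} (A : FinAut α) (C : Set (A.Trans → ℕ)) : Set (List α) :=
  {w | ∃ π ∈ A.Run, FinAut.pathCount π ∈ C ∧ w = π.map FinAut.lbl}

/-- The language of the ε-constrained automaton `(A, C)`. -/
def EpsCALang {α : Type} (A : FinAut (Option α)) (C : Set (A.Trans → ℕ)) :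
    Set (List α) :=
  {w | ∃ π ∈ A.Run, FinAut.pathCount π ∈ C ∧ w = π.filterMap FinAut.lbl}

def RecByCA {α : Type} (L : Set (List α)) : Prop :=
  ∃ (A : FinAut α) (C : Set (A.Trans → ℕ)), IsSemilinearSetN C ∧ CALang A C = L

def RecByDetCA {α : Type} (L : Set (List α)) : Prop :=
  ∃ (A : FinAut α) (C : Set (A.Trans → ℕ)),
    A.Deterministic ∧ IsSemilinearSetN C ∧ CALang A C = L

def RecByEpsCA {α : Type} (L : Set (List α)) : Prop :=
  ∃ (A : FinAut (Option α)) (C : Set (A.Trans → ℕ)),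
    IsSemilinearSetN C ∧ EpsCALang A C = L

/-- `L` is a finite union of languages of flat deterministic constrained
automata. -/
def FlatDetCAUnion {α : Type} (L : Set (List α)) : Prop :=
  ∃ (m : ℕ) (A : Fin m → FinAut α) (C : ∀ b, Set ((A b).Trans → ℕ)),
    (∀ b, (A b).Flat) ∧ (∀ b, (A b).Deterministic) ∧
    (∀ b, IsSemilinearSetN (C b)) ∧ L = ⋃ b, CALang (A b) (C b)

/-! ### Parikh automata -/

/-- Projection of a word over `Σ × ℕ^d` on `Σ`. -/
def PsiW {α : Type} {d : ℕ} (ω : List (α × (Fin d → ℕ))) : List α :=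
  ω.map Prod.fst

/-- Extended Parikh image: the sum of the vector components. -/
def PhiTilde {α : Type} {d : ℕ} (ω : List (α × (Fin d → ℕ))) : Fin d → ℕ :=
  (ω.map Prod.snd).sum

/-- The language of the Parikh automaton `(A, C)`.  (Note that the set `D` of
vectors appearing on transitions of `A` is automatically finite, since the
transition set of `A` is finite.) -/
def PALang {α : Type} {d : ℕ} (A : FinAut (α × (Fin d → ℕ))) (C : Set (Fin d → ℕ)) :
    Set (List α) :=
  {w | ∃ ω ∈ A.lang, PhiTilde ω ∈ C ∧ w = PsiW ω}

/-- Determinism for Parikh automata: at most one pair `(v, q')` for each state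
`q` and letter `a`. -/
def PADet {α : Type} {d : ℕ} (A : FinAut (α × (Fin d → ℕ))) : Prop :=
  ∀ ⦃p : A.σ⦄ ⦃a : α⦄ ⦃v v' : Fin d → ℕ⦄ ⦃q q' : A.σ⦄,
    (p, (a, v), q) ∈ A.δ → (p, (a, v'), q') ∈ A.δ → v = v' ∧ q = q'

def RecByPA {α : Type} (L : Set (List α)) : Prop :=
  ∃ (d : ℕ) (A : FinAut (α × (Fin d → ℕ))) (C : Set (Fin d → ℕ)),
    IsSemilinearSetN C ∧ PALang A C = L

def RecByDetPA {α : Type} (L : Set (List α)) : Prop :=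
  ∃ (d : ℕ) (A : FinAut (α × (Fin d → ℕ))) (C : Set (Fin d → ℕ)),
    PADet A ∧ IsSemilinearSetN C ∧ PALang A C = L

/-! ### Affine Parikh automata -/

/-- Apply the affine functions `x ↦ M t * x + v t` of the transitions of a path,
in order (first transition first). -/
def pathApply {α : Type} {d : ℕ} (A : FinAut α) (M : A.Trans → Matrix (Fin d) (Fin d) ℕ)
    (v : A.Trans → Fin d → ℕ) : List A.Trans → (Fin d → ℕ) → (Fin d → ℕ)
  | [], x => x
  | t :: π, x => pathApply A M v π ((M t).mulVec x + v t)

/-- The language of the affine Parikh automaton `(A, U, C)`, where the affine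
function attached to transition `t` is `x ↦ M t * x + v t`. -/
def APALang {α : Type} {d : ℕ} (A : FinAut α) (M : A.Trans → Matrix (Fin d) (Fin d) ℕ)
    (v : A.Trans → Fin d → ℕ) (C : Set (Fin d → ℕ)) : Set (List α) :=
  {w | ∃ π ∈ A.Run, pathApply A M v π 0 ∈ C ∧ w = π.map FinAut.lbl}

/-- The monoid of the APA: the multiplicative matrix monoid generated by the
matrices of the transitions. -/
def APAMonoid {α : Type} {d : ℕ} (A : FinAut α) (M : A.Trans → Matrix (Fin d) (Fin d) ℕ) :
    Set (Matrix (Fin d) (Fin d) ℕ) :=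
  (Submonoid.closure (Set.range M) : Submonoid (Matrix (Fin d) (Fin d) ℕ))

/-! ### Semilinear regular expressions -/

/-- The language `y₀ x₁* y₁ ⋯ xₙ* yₙ` of a branch of an SLRE. -/
def branchLang {β : Type} {n : ℕ} (y : Fin (n + 1) → List β) (x : Fin n → List β) :
    Set (List β) :=
  {w | ∃ k : Fin n → ℕ,
    w = y 0 ++ (List.ofFn fun i : Fin n => wpow (x i) (k i) ++ y i.succ).flatten}

end


/-! ### Auxiliary development for Statement 16 -/

noncomputable section BSLAux
namespace BSLAux

attribute [reducible] FinAut.Trans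

/-! #### countOcc lemmas -/

lemma countOcc_nil {β : Type} (b : β) : countOcc ([] : List β) b = 0 := rfl

lemma countOcc_cons {β : Type} (a : β) (l : List β) (b : β) :
    countOcc (a :: l) b = (if a = b then 1 else 0) + countOcc l b := by
  unfold countOcc
  rw [List.filter_cons]
  by_cases h : a = b <;> simp [h, Nat.add_comm]

lemma countOcc_append {β : Type} (l₁ l₂ : List β) (b : β) :
    countOcc (l₁ ++ l₂) b = countOcc l₁ b + countOcc l₂ b := by
  unfold countOcc
  rw [List.filter_append, List.length_append]

/-! #### Semilinear preimages under coordinate projections -/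

variable {ι κ : Type}

def projHom (t : κ → ι) : (ι → ℕ) →+ (κ → ℕ) where
  toFun v := fun j => v (t j)
  map_zero' := rfl
  map_add' _ _ := rfl

def liftHom (t : κ → ι) : (κ → ℕ) →+ (ι → ℕ) where
  toFun u := fun s => if h : ∃ j, t j = s then u h.choose else 0
  map_zero' := by funext s; by_cases h : ∃ j, t j = s <;> simp [h]
  map_add' u u' := by funext s; by_cases h : ∃ j, t j = s <;> simp [h]

lemma liftHom_apply_mem (t : κ → ι) (ht : Function.Injective t) (u : κ → ℕ) (j : κ) :
    liftHom t u (t j) = u j := by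
  have h : ∃ j', t j' = t j := ⟨j, rfl⟩
  have hs := h.choose_spec
  simp only [liftHom, AddMonoidHom.coe_mk, ZeroHom.coe_mk, dif_pos h]
  exact congrArg u (ht hs)

lemma projHom_liftHom (t : κ → ι) (ht : Function.Injective t) (u : κ → ℕ) :
    projHom t (liftHom t u) = u := by
  funext j
  exact liftHom_apply_mem t ht u j

lemma isLinearSet_comap [Finite ι] (t : κ → ι) (ht : Function.Injective t)
    (D : Set (κ → ℕ)) (hD : IsLinearSetN D) :
    IsLinearSetN {v : ι → ℕ | (fun j => v (t j)) ∈ D} := by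
  classical
  have : Fintype ι := Fintype.ofFinite ι
  obtain ⟨c, P, hPfin, rfl⟩ := hD
  set D' : Set (ι → ℕ) := (fun s => Pi.single s (1 : ℕ)) '' {s : ι | ¬ ∃ j, t j = s}
    with hD'
  refine ⟨liftHom t c, liftHom t '' P ∪ D', (hPfin.image _).union ((Set.toFinite _).image _), ?_⟩
  ext v
  simp only [Set.mem_setOf_eq]
  constructor
  · rintro ⟨p, hp, hgv⟩
    set r : ι → ℕ := fun s => if ∃ j, t j = s then 0 else v s with hr
    have h1 : liftHom t p ∈ AddSubmonoid.closure (liftHom t '' P ∪ D') := by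
      have : liftHom t p ∈ AddSubmonoid.map (liftHom t) (AddSubmonoid.closure P) :=
        AddSubmonoid.mem_map_of_mem _ hp
      rw [AddMonoidHom.map_mclosure] at this
      exact AddSubmonoid.closure_mono Set.subset_union_left this
    have h2 : r ∈ AddSubmonoid.closure (liftHom t '' P ∪ D') := by
      have hsum : r = ∑ s : ι, Pi.single s (r s) := (Finset.univ_sum_single r).symm
      rw [hsum]
      refine AddSubmonoid.sum_mem _ fun s _ => ?_
      by_cases h : ∃ j, t j = s
      · simp only [hr, if_pos h, Pi.single_zero]
        exact AddSubmonoid.zero_mem _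
      · have hview : (Pi.single s (r s) : ι → ℕ) = r s • (Pi.single s (1 : ℕ) : ι → ℕ) := by
          funext x
          by_cases hx : x = s <;> simp [Pi.single_apply, hx]
        rw [hview]
        have hmemD' : (Pi.single s (1 : ℕ) : ι → ℕ) ∈ D' := by
          rw [hD']; exact ⟨s, h, rfl⟩
        exact AddSubmonoid.nsmul_mem _
          (AddSubmonoid.subset_closure (Set.mem_union_right _ hmemD')) _
    refine ⟨liftHom t p + r,
      AddSubmonoid.add_mem (AddSubmonoid.closure (liftHom t '' P ∪ D')) h1 h2, ?_⟩
    funext s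
    by_cases h : ∃ j, t j = s
    · obtain ⟨j, rfl⟩ := h
      have hv : v (t j) = c j + p j := by
        have := congrFun hgv j; simp at this; omega
      simp only [vadd_eq_add, Pi.add_apply, liftHom_apply_mem t ht, hr,
        if_pos (⟨j, rfl⟩ : ∃ j', t j' = t j)]
      omega
    · simp only [vadd_eq_add, Pi.add_apply, hr, if_neg h]
      simp only [liftHom, AddMonoidHom.coe_mk, ZeroHom.coe_mk, dif_neg h]
      omega
  · rintro ⟨p', hp', rfl⟩
    have hgp : projHom t p' ∈ AddSubmonoid.closure P := by
      have hmem : projHom t p' ∈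
          AddSubmonoid.map (projHom t) (AddSubmonoid.closure (liftHom t '' P ∪ D')) :=
        AddSubmonoid.mem_map_of_mem _ hp'
      rw [AddMonoidHom.map_mclosure] at hmem
      have hle : AddSubmonoid.closure (projHom t '' (liftHom t '' P ∪ D')) ≤
          AddSubmonoid.closure P := by
        rw [AddSubmonoid.closure_le]
        rintro x ⟨y, hy, rfl⟩
        rcases hy with ⟨z, hz, rfl⟩ | hy
        · rw [projHom_liftHom t ht]
          exact AddSubmonoid.subset_closure hz
        · rw [hD'] at hy
          obtain ⟨s, hs, rfl⟩ := hy
          have hz : projHom t (Pi.single s (1 : ℕ)) = 0 := by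
            funext j
            have hne : t j ≠ s := fun he => hs ⟨j, he⟩
            simp [projHom, Pi.single_apply, hne]
          rw [hz]
          exact AddSubmonoid.zero_mem _
      exact hle hmem
    refine ⟨projHom t p', hgp, ?_⟩
    have hcp : projHom t (liftHom t c + p') = c + projHom t p' := by
      rw [map_add, projHom_liftHom t ht]
    exact funext fun j => by simp [vadd_eq_add, projHom, liftHom_apply_mem t ht]

lemma isSemilinearSet_comap [Finite ι] (t : κ → ι) (ht : Function.Injective t)
    (S : Set (κ → ℕ)) (hS : IsSemilinearSetN S) :
    IsSemilinearSetN {v : ι → ℕ | (fun j => v (t j)) ∈ S} := by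
  obtain ⟨𝒮, hfin, hlin, rfl⟩ := hS
  refine ⟨(fun D => {v : ι → ℕ | (fun j => v (t j)) ∈ D}) '' 𝒮, hfin.image _, ?_, ?_⟩
  · rintro D ⟨D₀, hD₀, rfl⟩
    exact isLinearSet_comap t ht D₀ (hlin D₀ hD₀)
  · ext v
    simp only [Set.mem_setOf_eq, Set.mem_sUnion, Set.mem_image]
    constructor
    · rintro ⟨D₀, hD₀, hv⟩
      exact ⟨_, ⟨D₀, hD₀, rfl⟩, hv⟩
    · rintro ⟨_, ⟨D₀, hD₀, rfl⟩, hv⟩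
      exact ⟨D₀, hD₀, hv⟩

/-! #### socProd lemmas -/

lemma socProd_zero {β : Type} {n : ℕ} (w : Fin n → List β) :
    socProd w (fun _ => 0) = [] := by
  unfold socProd
  rw [List.flatten_eq_nil_iff]
  intro l hl
  rw [List.mem_ofFn] at hl
  obtain ⟨i, rfl⟩ := hl
  rfl

lemma flatten_ofFn_prepend {β : Type} :
    ∀ {m : ℕ} (f : Fin m → List β) (i : Fin m) (u : List β),
    (∀ i', i' < i → f i' = []) →
    (List.ofFn (Function.update f i (u ++ f i))).flatten = u ++ (List.ofFn f).flatten := by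
  intro m
  induction m with
  | zero => intro f i; exact i.elim0
  | succ m ih =>
    intro f i u h0
    rcases Fin.eq_zero_or_eq_succ i with rfl | ⟨i₀, rfl⟩
    · rw [List.ofFn_succ, List.ofFn_succ, List.flatten_cons, List.flatten_cons,
        Function.update_self]
      have hs : (fun j : Fin m => Function.update f 0 (u ++ f 0) j.succ) =
          (fun j : Fin m => f j.succ) := by
        funext j
        exact Function.update_of_ne (Fin.succ_ne_zero j) _ f
      rw [hs, List.append_assoc]
    · rw [List.ofFn_succ, List.ofFn_succ, List.flatten_cons, List.flatten_cons]
      have h00 : f 0 = [] := h0 0 (Fin.succ_pos i₀)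
      have hz : Function.update f i₀.succ (u ++ f i₀.succ) 0 = f 0 :=
        Function.update_of_ne (Fin.succ_ne_zero i₀).symm _ f
      have hcomp : (fun j : Fin m => Function.update f i₀.succ (u ++ f i₀.succ) j.succ) =
          Function.update (fun j : Fin m => f j.succ) i₀ (u ++ f i₀.succ) := by
        have := Function.update_comp_eq_of_injective f
          (Fin.succ_injective m) i₀ (u ++ f i₀.succ)
        exact this
      rw [hz, hcomp, h00]
      have hrec := ih (fun j : Fin m => f j.succ) i₀ u
        (fun i' hi' => h0 i'.succ (Fin.succ_lt_succ_iff.mpr hi'))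
      simp only [List.nil_append]
      exact hrec

lemma socProd_succ {β : Type} {n : ℕ} (w : Fin n → List β) (k k' : Fin n → ℕ) (i : Fin n)
    (hk0 : ∀ i', i' < i → k i' = 0)
    (hk' : ∀ i', k' i' = (if i' = i then 1 else 0) + k i') :
    socProd w k' = w i ++ socProd w k := by
  unfold socProd
  have hfun : (fun i' => wpow (w i') (k' i')) =
      Function.update (fun i' => wpow (w i') (k i')) i (w i ++ wpow (w i) (k i)) := by
    funext i'
    by_cases h : i' = i
    · subst h
      rw [Function.update_self, hk' i', if_pos rfl, Nat.add_comm]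
      rfl
    · rw [Function.update_of_ne h, hk' i', if_neg h, Nat.zero_add]
  rw [hfun]
  exact flatten_ofFn_prepend _ i (w i) (fun i' hi' => by rw [hk0 i' hi']; rfl)

/-! #### The block automaton -/

lemma steps_inv {γ : Type} {A : FinAut γ} {q r : A.σ} {π : List A.Trans}
    (h : A.Steps q π r) : (π = [] ∧ q = r) ∨
      ∃ t ρ, π = t :: ρ ∧ FinAut.src t = q ∧ A.Steps (FinAut.tgt t) ρ r := by
  cases h with
  | nil => exact Or.inl ⟨rfl, rfl⟩
  | cons hs hr => exact Or.inr ⟨_, _, rfl, hs, hr⟩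

lemma steps_append {γ : Type} {A : FinAut γ} {q r s : A.σ} {π₁ π₂ : List A.Trans}
    (h₁ : A.Steps q π₁ r) (h₂ : A.Steps r π₂ s) : A.Steps q (π₁ ++ π₂) s := by
  induction h₁ with
  | nil => exact h₂
  | cons hsrc _ ih => exact FinAut.Steps.cons hsrc (ih h₂)

section Automaton

variable {α : Type} [Fintype α] {n : ℕ}
variable (w : Fin n → List α) (hw : ∀ i, 0 < (w i).length) (hn : 0 < n)

/-- The next position after `j`, cyclically. -/
def nxt (i : Fin n) (j : Fin (w i).length) : Fin (w i).length :=
  ⟨((j : ℕ) + 1) % (w i).length, Nat.mod_lt _ (Nat.lt_of_le_of_lt (Nat.zero_le _) j.isLt)⟩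

def pos0 (i : Fin n) : Fin (w i).length := ⟨0, hw i⟩

def BAδ : Set (((i : Fin n) × Fin (w i).length) × Option α × ((i : Fin n) × Fin (w i).length)) :=
  {x | (∃ (i : Fin n) (j : Fin (w i).length),
          x = (⟨i, j⟩, some ((w i).get j), ⟨i, nxt w i j⟩)) ∨
       (∃ i i' : Fin n, (i : ℕ) + 1 = (i' : ℕ) ∧
          x = (⟨i, pos0 w hw i⟩, none, ⟨i', pos0 w hw i'⟩))}

/-- The flat automaton reading `w 0 * ⋯ * w (n-1) *`. -/
@[reducible] def BA : FinAut (Option α) where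
  σ := (i : Fin n) × Fin (w i).length
  finσ := inferInstance
  init := ⟨⟨0, hn⟩, pos0 w hw _⟩
  accept := {⟨⟨n - 1, Nat.sub_lt hn Nat.one_pos⟩, pos0 w hw _⟩}
  δ := BAδ w hw
  finδ := Set.toFinite _

/-- The final state. -/
def finSt : (BA w hw hn).σ := ⟨⟨n - 1, Nat.sub_lt hn Nat.one_pos⟩, pos0 w hw _⟩

/-- The designated transition of block `i`: the one reading the first letter of `w i`. -/
def tTr (i : Fin n) : (BA w hw hn).Trans :=
  ⟨(⟨i, pos0 w hw i⟩, some ((w i).get (pos0 w hw i)), ⟨i, nxt w i (pos0 w hw i)⟩),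
    Or.inl ⟨i, pos0 w hw i, rfl⟩⟩

lemma tTr_injective : Function.Injective (tTr w hw hn) := by
  intro i i' h
  have h1 := congrArg (fun t : (BA w hw hn).Trans => t.1.1.1) h
  exact h1

lemma ne_tTr_of_pos (tr : (BA w hw hn).Trans) (h : (tr.1.1.2 : ℕ) ≠ 0) (i' : Fin n) :
    tr ≠ tTr w hw hn i' := by
  intro he
  apply h
  have := congrArg (fun t : (BA w hw hn).Trans => (t.1.1.2 : ℕ)) he
  simpa [tTr, pos0] using this

lemma ne_tTr_of_none (tr : (BA w hw hn).Trans) (h : tr.1.2.1 = none) (i' : Fin n) :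
    tr ≠ tTr w hw hn i' := by
  intro he
  have := congrArg (fun t : (BA w hw hn).Trans => t.1.2.1) he
  rw [h] at this
  simp [tTr] at this

lemma finSt_snd_val : ((finSt w hw hn).2 : ℕ) = 0 := rfl

lemma mid_word :
    ∀ (d : ℕ) (π : List (BA w hw hn).Trans) (i : Fin n) (j : Fin (w i).length),
      (w i).length - (j : ℕ) = d → 0 < (j : ℕ) →
      (BA w hw hn).Steps ⟨i, j⟩ π (finSt w hw hn) →
      ∃ π', (BA w hw hn).Steps ⟨i, pos0 w hw i⟩ π' (finSt w hw hn) ∧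
        π.filterMap FinAut.lbl = (w i).drop (j : ℕ) ++ π'.filterMap FinAut.lbl ∧
        (∀ i', countOcc π (tTr w hw hn i') = countOcc π' (tTr w hw hn i')) ∧
        π'.length < π.length := by
  intro d
  induction d with
  | zero =>
    intro π i j hd hj _
    exact absurd j.isLt (by omega)
  | succ d ih =>
    intro π i j hd hj hsteps
    generalize hfin : finSt w hw hn = f at hsteps
    rcases steps_inv hsteps with ⟨rfl, hqf⟩ | ⟨tr, rest, rfl, hsrc, hrest⟩
    · subst hqf
      exfalso
      have hv := congrArg (fun s : (BA w hw hn).σ => ((s.2 : ℕ))) hfin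
      dsimp only at hv
      rw [finSt_snd_val w hw hn] at hv
      omega
    · subst hfin
      obtain ⟨⟨s, a, s'⟩, hδ⟩ := tr
      have hs : s = ⟨i, j⟩ := hsrc
      subst hs
      have hδ2 := hδ
      rcases hδ2 with ⟨i₁, j₁, hx⟩ | ⟨i₁, i₂, hii, hx⟩
      · -- read transition
        have h1 : (⟨i, j⟩ : (i : Fin n) × Fin (w i).length) = ⟨i₁, j₁⟩ :=
          congrArg Prod.fst hx
        injection h1 with he hheq
        subst he
        have hj1 : j = j₁ := eq_of_heq hheq
        subst hj1
        have ha : a = some ((w i).get j) := congrArg (fun x => x.2.1) hx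
        have hs' : s' = ⟨i, nxt w i j⟩ := congrArg (fun x => x.2.2) hx
        subst ha; subst hs'
        have hrest' : (BA w hw hn).Steps ⟨i, nxt w i j⟩ rest (finSt w hw hn) := hrest
        have hlblstep : FinAut.lbl (⟨(⟨i, j⟩, some ((w i).get j), ⟨i, nxt w i j⟩), hδ⟩ :
            (BA w hw hn).Trans) = some ((w i).get j) := rfl
        have htrne : ∀ i', (⟨(⟨i, j⟩, some ((w i).get j), ⟨i, nxt w i j⟩), hδ⟩ :
            (BA w hw hn).Trans) ≠ tTr w hw hn i' :=
          fun i' => ne_tTr_of_pos w hw hn _ (show (j : ℕ) ≠ 0 by omega) i'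
        rcases Nat.lt_or_ge ((j : ℕ) + 1) ((w i).length) with hlt | hge
        · -- not the last letter of the word
          have hnxt : nxt w i j = ⟨(j : ℕ) + 1, hlt⟩ := by
            apply Fin.ext
            simp [nxt, Nat.mod_eq_of_lt hlt]
          rw [hnxt] at hrest'
          obtain ⟨π', hst, hlbl, hcnt, hlen⟩ :=
            ih rest i ⟨(j : ℕ) + 1, hlt⟩ (show (w i).length - ((j : ℕ) + 1) = d by omega)
              (show 0 < (j : ℕ) + 1 by omega) hrest'
          have hlbl' : rest.filterMap FinAut.lbl
              = (w i).drop ((j : ℕ) + 1) ++ π'.filterMap FinAut.lbl := hlbl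
          refine ⟨π', hst, ?_, ?_, ?_⟩
          · rw [List.filterMap_cons_some hlblstep, hlbl',
              List.drop_eq_getElem_cons (i := (j : ℕ)) j.isLt, ← List.cons_append]
            rfl
          · intro i'
            rw [countOcc_cons, if_neg (htrne i'), Nat.zero_add, hcnt i']
          · simpa using Nat.lt_succ_of_lt hlen
        · -- last letter of the word: back to position 0
          have hl : (j : ℕ) + 1 = (w i).length := by omega
          have hnxt : nxt w i j = pos0 w hw i := by
            apply Fin.ext
            simp [nxt, pos0, hl]
          rw [hnxt] at hrest'
          refine ⟨rest, hrest', ?_, ?_, by simp⟩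
          · rw [List.filterMap_cons_some hlblstep,
              List.drop_eq_getElem_cons (i := (j : ℕ)) j.isLt,
              List.drop_eq_nil_of_le (by omega)]
            rfl
          · intro i'
            rw [countOcc_cons, if_neg (htrne i'), Nat.zero_add]
      · -- ε transition: impossible, source position is not 0
        exfalso
        have hv := congrArg (fun x : (BA w hw hn).σ × Option α × (BA w hw hn).σ =>
          ((x.1.2 : ℕ))) hx
        have hv' : (j : ℕ) = 0 := by simpa [pos0] using hv
        omega

lemma run_label :
    ∀ (N : ℕ) (π : List (BA w hw hn).Trans), π.length ≤ N →
      ∀ (i : Fin n), (BA w hw hn).Steps ⟨i, pos0 w hw i⟩ π (finSt w hw hn) →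
      π.filterMap FinAut.lbl = socProd w (fun i' => countOcc π (tTr w hw hn i')) ∧
      ∀ i', i' < i → countOcc π (tTr w hw hn i') = 0 := by
  intro N
  induction N with
  | zero =>
    intro π hlen i _
    have hnil : π = [] := List.length_eq_zero_iff.mp (by omega)
    subst hnil
    exact ⟨(socProd_zero w).symm, fun _ _ => rfl⟩
  | succ N ih =>
    intro π hlen i hsteps
    cases π with
    | nil => exact ⟨(socProd_zero w).symm, fun _ _ => rfl⟩
    | cons tr rest =>
      rcases steps_inv hsteps with ⟨hc, -⟩ | ⟨tr, rest, hc, hsrc, hrest⟩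
      · exact absurd hc (List.cons_ne_nil _ _)
      · obtain ⟨rfl, rfl⟩ := List.cons.inj hc
        obtain ⟨⟨s, a, s'⟩, hδ⟩ := tr
        have hs : s = ⟨i, pos0 w hw i⟩ := hsrc
        subst hs
        have hlenr : rest.length ≤ N := by
          simp only [List.length_cons] at hlen; omega
        have hδ2 := hδ
        rcases hδ2 with ⟨i₁, j₁, hx⟩ | ⟨i₁, i₂, hii, hx⟩
        · -- read transition from position 0 of block i
          have h1 : (⟨i, pos0 w hw i⟩ : (i : Fin n) × Fin (w i).length) = ⟨i₁, j₁⟩ :=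
            congrArg Prod.fst hx
          injection h1 with he hheq
          subst he
          have hj1 : pos0 w hw i = j₁ := eq_of_heq hheq
          subst hj1
          have ha : a = some ((w i).get (pos0 w hw i)) := congrArg (fun x => x.2.1) hx
          have hs' : s' = ⟨i, nxt w i (pos0 w hw i)⟩ := congrArg (fun x => x.2.2) hx
          subst ha; subst hs'
          have htr : (⟨(⟨i, pos0 w hw i⟩, some ((w i).get (pos0 w hw i)),
              ⟨i, nxt w i (pos0 w hw i)⟩), hδ⟩ : (BA w hw hn).Trans) = tTr w hw hn i :=
            Subtype.ext rfl
          have hcntgen : ∀ (ρ : List (BA w hw hn).Trans) (i' : Fin n),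
              countOcc ((⟨(⟨i, pos0 w hw i⟩, some ((w i).get (pos0 w hw i)),
                ⟨i, nxt w i (pos0 w hw i)⟩), hδ⟩ : (BA w hw hn).Trans) :: ρ)
                (tTr w hw hn i')
              = (if i' = i then 1 else 0) + countOcc ρ (tTr w hw hn i') := by
            intro ρ i'
            rw [countOcc_cons]
            by_cases h : i' = i
            · subst h
              rw [if_pos htr, if_pos rfl]
            · rw [if_neg (fun he => h ((tTr_injective w hw hn (htr ▸ he)).symm)),
                if_neg h]
          have hrest' : (BA w hw hn).Steps ⟨i, nxt w i (pos0 w hw i)⟩ rest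
              (finSt w hw hn) := hrest
          have hlblstep : FinAut.lbl (⟨(⟨i, pos0 w hw i⟩, some ((w i).get (pos0 w hw i)),
              ⟨i, nxt w i (pos0 w hw i)⟩), hδ⟩ : (BA w hw hn).Trans)
              = some ((w i).get (pos0 w hw i)) := rfl
          rcases Nat.lt_or_ge 1 ((w i).length) with hlen1 | hlen1
          · -- |w i| > 1 : go to position 1, then use mid_word
            have hnxt : nxt w i (pos0 w hw i) = ⟨1, hlen1⟩ := by
              apply Fin.ext
              simp [nxt, pos0, Nat.mod_eq_of_lt hlen1]
            rw [hnxt] at hrest'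
            obtain ⟨π', hst, hlblr, hcntr, hlenlt⟩ :=
              mid_word w hw hn ((w i).length - 1) rest i ⟨1, hlen1⟩ rfl
                (show (0 : ℕ) < 1 by omega) hrest'
            have hlblr' : rest.filterMap FinAut.lbl
                = (w i).drop 1 ++ π'.filterMap FinAut.lbl := hlblr
            obtain ⟨hl, hc⟩ := ih π' (by omega) i hst
            have hcnt : ∀ i', countOcc (⟨(⟨i, pos0 w hw i⟩, some ((w i).get (pos0 w hw i)),
                ⟨i, nxt w i (pos0 w hw i)⟩), hδ⟩ :: rest) (tTr w hw hn i')
                = (if i' = i then 1 else 0) + countOcc π' (tTr w hw hn i') := by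
              intro i'
              rw [hcntgen rest i', hcntr i']
            have hsp := socProd_succ w (fun i' => countOcc π' (tTr w hw hn i')) _ i hc hcnt
            have hhead : (w i).get (pos0 w hw i) :: (w i).drop 1 = w i := by
              conv_rhs => rw [show w i = (w i).drop 0 from List.drop_zero.symm,
                List.drop_eq_getElem_cons (hw i)]
              rfl
            constructor
            · rw [List.filterMap_cons_some hlblstep, hlblr', hl, hsp,
                ← List.cons_append, hhead]
            · intro i' hi'
              rw [hcnt i', if_neg (by intro h; subst h; exact absurd hi' (lt_irrefl _)),
                Nat.zero_add]
              exact hc i' hi'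
          · -- |w i| = 1 : stay at position 0
            have hlen1' : (w i).length = 1 := by have := hw i; omega
            have hnxt : nxt w i (pos0 w hw i) = pos0 w hw i := by
              apply Fin.ext
              simp [nxt, pos0, hlen1']
            rw [hnxt] at hrest'
            obtain ⟨hl, hc⟩ := ih rest hlenr i hrest'
            have hsp := socProd_succ w (fun i' => countOcc rest (tTr w hw hn i')) _ i hc
              (hcntgen rest)
            have hwi : w i = [(w i).get (pos0 w hw i)] := by
              conv_lhs => rw [show w i = (w i).drop 0 from List.drop_zero.symm,
                List.drop_eq_getElem_cons (hw i), List.drop_eq_nil_of_le (by omega)]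
              rfl
            constructor
            · rw [List.filterMap_cons_some hlblstep, hl, hsp]
              conv_rhs => rw [hwi]
              rw [List.singleton_append]
            · intro i' hi'
              rw [hcntgen rest i', if_neg (by intro h; subst h; exact absurd hi' (lt_irrefl _)),
                Nat.zero_add]
              exact hc i' hi'
        · -- ε transition to the next block
          have h1 : (⟨i, pos0 w hw i⟩ : (i : Fin n) × Fin (w i).length)
              = ⟨i₁, pos0 w hw i₁⟩ := congrArg Prod.fst hx
          have he : i = i₁ := congrArg Sigma.fst h1
          subst he
          have ha : a = none := congrArg (fun x => x.2.1) hx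
          have hs' : s' = ⟨i₂, pos0 w hw i₂⟩ := congrArg (fun x => x.2.2) hx
          subst ha; subst hs'
          have hrest' : (BA w hw hn).Steps ⟨i₂, pos0 w hw i₂⟩ rest (finSt w hw hn) := hrest
          obtain ⟨hl, hc⟩ := ih rest hlenr i₂ hrest'
          have hnone : ∀ i', (⟨(⟨i, pos0 w hw i⟩, none, ⟨i₂, pos0 w hw i₂⟩), hδ⟩ :
              (BA w hw hn).Trans) ≠ tTr w hw hn i' :=
            fun i' => ne_tTr_of_none w hw hn _ rfl i'
          have hcnt : ∀ i', countOcc (⟨(⟨i, pos0 w hw i⟩, none, ⟨i₂, pos0 w hw i₂⟩), hδ⟩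
              :: rest) (tTr w hw hn i') = countOcc rest (tTr w hw hn i') := by
            intro i'
            rw [countOcc_cons, if_neg (hnone i'), Nat.zero_add]
          constructor
          · rw [List.filterMap_cons_none (show FinAut.lbl (⟨(⟨i, pos0 w hw i⟩, none,
                ⟨i₂, pos0 w hw i₂⟩), hδ⟩ : (BA w hw hn).Trans) = none from rfl), hl]
            exact (congrArg (socProd w) (funext fun i' => hcnt i')).symm
          · intro i' hi'
            rw [hcnt i']
            exact hc i' (by rw [Fin.lt_def] at hi' ⊢; omega)

/-- One pass through the letters of `w i`, starting at position `j`, with fuel `d`. -/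
def tp (i : Fin n) : ℕ → ℕ → List (BA w hw hn).Trans
  | 0, _ => []
  | d + 1, j =>
    if h : j < (w i).length then
      ⟨(⟨i, ⟨j, h⟩⟩, some ((w i).get ⟨j, h⟩), ⟨i, nxt w i ⟨j, h⟩⟩),
        Or.inl ⟨i, ⟨j, h⟩, rfl⟩⟩ :: tp i d (j + 1)
    else []

lemma tp_steps (i : Fin n) : ∀ (d j : ℕ) (hj : j < (w i).length), j + d = (w i).length →
    (BA w hw hn).Steps ⟨i, ⟨j, hj⟩⟩ (tp w hw hn i d j) ⟨i, pos0 w hw i⟩ := by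
  intro d
  induction d with
  | zero => intro j hj h; omega
  | succ d ih =>
    intro j hj h
    simp only [tp, dif_pos hj]
    refine FinAut.Steps.cons rfl ?_
    rcases Nat.lt_or_ge (j + 1) ((w i).length) with hlt | hge
    · have hnxt : nxt w i ⟨j, hj⟩ = ⟨j + 1, hlt⟩ := by
        apply Fin.ext
        simp [nxt, Nat.mod_eq_of_lt hlt]
      have := ih (j + 1) hlt (by omega)
      show (BA w hw hn).Steps ⟨i, nxt w i ⟨j, hj⟩⟩ (tp w hw hn i d (j + 1)) ⟨i, pos0 w hw i⟩
      rw [hnxt]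
      exact this
    · have hd0 : d = 0 := by omega
      subst hd0
      have hnxt : nxt w i ⟨j, hj⟩ = pos0 w hw i := by
        apply Fin.ext
        simp [nxt, pos0, show j + 1 = (w i).length by omega]
      show (BA w hw hn).Steps ⟨i, nxt w i ⟨j, hj⟩⟩ (tp w hw hn i 0 (j + 1)) ⟨i, pos0 w hw i⟩
      rw [hnxt]
      exact FinAut.Steps.nil _

lemma tp_label (i : Fin n) : ∀ (d j : ℕ), j + d = (w i).length →
    (tp w hw hn i d j).filterMap FinAut.lbl = (w i).drop j := by
  intro d
  induction d with
  | zero =>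
    intro j h
    rw [List.drop_eq_nil_of_le (by omega)]
    rfl
  | succ d ih =>
    intro j h
    have hj : j < (w i).length := by omega
    simp only [tp, dif_pos hj]
    erw [List.filterMap_cons_some (show FinAut.lbl (⟨(⟨i, ⟨j, hj⟩⟩, some ((w i).get ⟨j, hj⟩),
      ⟨i, nxt w i ⟨j, hj⟩⟩), Or.inl ⟨i, ⟨j, hj⟩, rfl⟩⟩ : (BA w hw hn).Trans)
      = some ((w i).get ⟨j, hj⟩) from rfl), ih (j + 1) (by omega),
      List.drop_eq_getElem_cons (i := j) hj]
    rfl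

lemma tp_count_pos (i : Fin n) : ∀ (d j : ℕ), 0 < j → ∀ i',
    countOcc (tp w hw hn i d j) (tTr w hw hn i') = 0 := by
  intro d
  induction d with
  | zero => intro j _ i'; rfl
  | succ d ih =>
    intro j hj i'
    by_cases h : j < (w i).length
    · simp only [tp, dif_pos h]
      erw [countOcc_cons, if_neg (ne_tTr_of_pos w hw hn _ (show j ≠ 0 by omega) i'),
        Nat.zero_add]
      exact ih (j + 1) (by omega) i'
    · simp only [tp, dif_neg h]
      rfl

lemma tp_count_zero (i : Fin n) (d : ℕ) (hd : 0 < d) (i' : Fin n) :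
    countOcc (tp w hw hn i d 0) (tTr w hw hn i') = if i = i' then 1 else 0 := by
  cases d with
  | zero => omega
  | succ d =>
    simp only [tp, dif_pos (hw i)]
    erw [countOcc_cons, tp_count_pos w hw hn i d 1 (by omega) i', Nat.add_zero]
    by_cases h : i = i'
    · subst h
      have he : (⟨(⟨i, ⟨0, hw i⟩⟩, some ((w i).get ⟨0, hw i⟩), ⟨i, nxt w i ⟨0, hw i⟩⟩),
          Or.inl ⟨i, ⟨0, hw i⟩, rfl⟩⟩ : (BA w hw hn).Trans) = tTr w hw hn i :=
        Subtype.ext rfl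
      rw [if_pos rfl]; exact if_pos he
    · rw [if_neg h]; exact if_neg (fun he => h (congrArg (fun t : (BA w hw hn).Trans => t.1.1.1) he))

/-- `r` full rounds through the letters of `w i`. -/
def bp (i : Fin n) : ℕ → List (BA w hw hn).Trans
  | 0 => []
  | r + 1 => tp w hw hn i (w i).length 0 ++ bp i r

lemma bp_steps (i : Fin n) : ∀ r,
    (BA w hw hn).Steps ⟨i, pos0 w hw i⟩ (bp w hw hn i r) ⟨i, pos0 w hw i⟩ := by
  intro r
  induction r with
  | zero => exact FinAut.Steps.nil _
  | succ r ih =>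
    exact steps_append (tp_steps w hw hn i (w i).length 0 (hw i) (by omega)) ih

lemma bp_label (i : Fin n) : ∀ r,
    (bp w hw hn i r).filterMap FinAut.lbl = wpow (w i) r := by
  intro r
  induction r with
  | zero => rfl
  | succ r ih =>
    show (tp w hw hn i (w i).length 0 ++ bp w hw hn i r).filterMap FinAut.lbl = _
    rw [List.filterMap_append, tp_label w hw hn i (w i).length 0 (by omega), ih,
      List.drop_zero]
    rfl

lemma bp_count (i : Fin n) : ∀ r i',
    countOcc (bp w hw hn i r) (tTr w hw hn i') = if i = i' then r else 0 := by
  intro r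
  induction r with
  | zero =>
    intro i'
    by_cases h : i = i' <;> simp [bp, countOcc_nil, h]
  | succ r ih =>
    intro i'
    show countOcc (tp w hw hn i (w i).length 0 ++ bp w hw hn i r) (tTr w hw hn i') = _
    rw [countOcc_append, tp_count_zero w hw hn i (w i).length (hw i) i', ih i']
    by_cases h : i = i'
    · rw [if_pos h, if_pos h, if_pos h]; omega
    · rw [if_neg h, if_neg h, if_neg h]

lemma exists_path (k : Fin n → ℕ) :
    ∀ (d i : ℕ) (hi : i < n), i + d = n →
      ∃ π, (BA w hw hn).Steps ⟨⟨i, hi⟩, pos0 w hw ⟨i, hi⟩⟩ π (finSt w hw hn) ∧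
        π.filterMap FinAut.lbl
          = (((List.ofFn fun i' => wpow (w i') (k i')).drop i)).flatten ∧
        ∀ i' : Fin n, countOcc π (tTr w hw hn i') = if i ≤ (i' : ℕ) then k i' else 0 := by
  intro d
  induction d with
  | zero => intro i hi h; omega
  | succ d ih =>
    intro i hi h
    have hlofn : (List.ofFn fun i' => wpow (w i') (k i')).length = n := by
      simp
    rcases Nat.lt_or_ge (i + 1) n with hlt | hge
    · -- not the last block
      obtain ⟨π', hst', hlbl', hcnt'⟩ := ih (i + 1) hlt (by omega)
      refine ⟨bp w hw hn ⟨i, hi⟩ (k ⟨i, hi⟩) ++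
        (⟨(⟨⟨i, hi⟩, pos0 w hw ⟨i, hi⟩⟩, none, ⟨⟨i + 1, hlt⟩, pos0 w hw ⟨i + 1, hlt⟩⟩),
          Or.inr ⟨⟨i, hi⟩, ⟨i + 1, hlt⟩, rfl, rfl⟩⟩ :: π'), ?_, ?_, ?_⟩
      · exact steps_append (bp_steps w hw hn ⟨i, hi⟩ (k ⟨i, hi⟩))
          (FinAut.Steps.cons rfl hst')
      · erw [List.filterMap_append, bp_label w hw hn ⟨i, hi⟩ (k ⟨i, hi⟩),
          List.filterMap_cons_none (show FinAut.lbl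
            (⟨(⟨⟨i, hi⟩, pos0 w hw ⟨i, hi⟩⟩, none, ⟨⟨i + 1, hlt⟩, pos0 w hw ⟨i + 1, hlt⟩⟩),
              Or.inr ⟨⟨i, hi⟩, ⟨i + 1, hlt⟩, rfl, rfl⟩⟩ : (BA w hw hn).Trans)
            = none from rfl), hlbl',
          List.drop_eq_getElem_cons (i := i) (by omega), List.flatten_cons,
          List.getElem_ofFn]
      · intro i'
        erw [countOcc_append, countOcc_cons, if_neg (ne_tTr_of_none w hw hn _ rfl i'),
          Nat.zero_add, bp_count w hw hn ⟨i, hi⟩ (k ⟨i, hi⟩) i', hcnt' i']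
        by_cases h1 : (⟨i, hi⟩ : Fin n) = i'
        · subst h1
          rw [if_pos rfl, if_neg (show ¬ (i + 1 ≤ i) by omega),
            if_pos (show i ≤ i by omega), Nat.add_zero]
        · rw [if_neg h1, Nat.zero_add]
          by_cases h2 : i + 1 ≤ (i' : ℕ)
          · rw [if_pos h2, if_pos (by omega)]
          · have hne : (i' : ℕ) ≠ i := fun hh => h1 (Fin.ext hh.symm)
            rw [if_neg h2, if_neg (show ¬ i ≤ (i' : ℕ) by omega)]
    · -- last block : i = n - 1
      have hlast : (⟨n - 1, Nat.sub_lt hn Nat.one_pos⟩ : Fin n) = ⟨i, hi⟩ :=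
        Fin.ext (by simp; omega)
      have hfinst : finSt w hw hn = ⟨⟨i, hi⟩, pos0 w hw ⟨i, hi⟩⟩ := by
        unfold finSt
        rw [hlast]
      refine ⟨bp w hw hn ⟨i, hi⟩ (k ⟨i, hi⟩), ?_, ?_, ?_⟩
      · rw [hfinst]
        exact bp_steps w hw hn ⟨i, hi⟩ (k ⟨i, hi⟩)
      · rw [bp_label w hw hn ⟨i, hi⟩ (k ⟨i, hi⟩),
          List.drop_eq_getElem_cons (i := i) (by omega),
          List.drop_eq_nil_of_le (by omega : (List.ofFn fun i' =>
            wpow (w i') (k i')).length ≤ i + 1),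
          List.flatten_cons, List.flatten_nil, List.append_nil, List.getElem_ofFn]
      · intro i'
        rw [bp_count w hw hn ⟨i, hi⟩ (k ⟨i, hi⟩) i']
        by_cases h1 : (⟨i, hi⟩ : Fin n) = i'
        · subst h1
          rw [if_pos rfl, if_pos (show i ≤ i by omega)]
        · have hne : (i' : ℕ) ≠ i := fun hh => h1 (Fin.ext hh.symm)
          have hlt' : (i' : ℕ) < n := i'.isLt
          rw [if_neg h1, if_neg (show ¬ i ≤ (i' : ℕ) by omega)]

end Automaton

end BSLAux
end BSLAux

/-- Every bounded semilinear language is the language of an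
ε-constrained automaton having the constraint-determinism property. -/
theorem bsl_has_constraintDet_epsCA {α : Type} [Fintype α] (L : Set (List α))
    (h : InBSL L) :
    ∃ (A : FinAut (Option α)) (C : Set (A.Trans → ℕ)),
      IsSemilinearSetN C ∧ EpsCALang A C = L ∧
      ∀ π₁ π₂, π₁ ∈ A.Run → π₂ ∈ A.Run →
        π₁.filterMap FinAut.lbl = π₂.filterMap FinAut.lbl →
        (FinAut.pathCount π₁ ∈ C ↔ FinAut.pathCount π₂ ∈ C) := by
  obtain ⟨n, w, hn, ⟨hne, hsub⟩, hsl⟩ := h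
  have hw : ∀ i, 0 < (w i).length := fun i => List.length_pos_iff.mpr (hne i)
  haveI : Finite ((BSLAux.BA w hw hn).Trans) := (BSLAux.BA w hw hn).finδ.to_subtype
  refine ⟨BSLAux.BA w hw hn,
    {v | (fun i => v (BSLAux.tTr w hw hn i)) ∈ IterSet L w}, ?_, ?_, ?_⟩
  · exact BSLAux.isSemilinearSet_comap _ (BSLAux.tTr_injective w hw hn) _ hsl
  · ext x
    simp only [EpsCALang, Set.mem_setOf_eq]
    constructor
    · rintro ⟨π, ⟨f, hf, hsteps⟩, hC, rfl⟩
      have hf' : f = BSLAux.finSt w hw hn := hf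
      subst hf'
      obtain ⟨hl, -⟩ := BSLAux.run_label w hw hn π.length π le_rfl ⟨0, hn⟩ hsteps
      rw [hl]
      exact hC
    · intro hx
      obtain ⟨k, hk⟩ := hsub x hx
      subst hk
      obtain ⟨π, hsteps, hlbl, hcnt⟩ := BSLAux.exists_path w hw hn k n 0 hn (by omega)
      refine ⟨π, ⟨BSLAux.finSt w hw hn, rfl, hsteps⟩, ?_, ?_⟩
      · show (fun i => FinAut.pathCount π (BSLAux.tTr w hw hn i)) ∈ IterSet L w
        have hfk : (fun i => FinAut.pathCount π (BSLAux.tTr w hw hn i)) = k := by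
          funext i
          rw [show FinAut.pathCount π (BSLAux.tTr w hw hn i)
            = countOcc π (BSLAux.tTr w hw hn i) from rfl, hcnt i,
            if_pos (Nat.zero_le _)]
        rw [hfk]
        exact hx
      · rw [hlbl, List.drop_zero]
        rfl
  · intro π₁ π₂ h₁ h₂ heq
    obtain ⟨f₁, hf₁, hs₁⟩ := h₁
    obtain ⟨f₂, hf₂, hs₂⟩ := h₂
    have hf₁' : f₁ = BSLAux.finSt w hw hn := hf₁
    have hf₂' : f₂ = BSLAux.finSt w hw hn := hf₂
    subst hf₁'; subst hf₂'
    obtain ⟨hl₁, -⟩ := BSLAux.run_label w hw hn π₁.length π₁ le_rfl ⟨0, hn⟩ hs₁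
    obtain ⟨hl₂, -⟩ := BSLAux.run_label w hw hn π₂.length π₂ le_rfl ⟨0, hn⟩ hs₂
    show ((fun i => FinAut.pathCount π₁ (BSLAux.tTr w hw hn i)) ∈ IterSet L w)
      ↔ ((fun i => FinAut.pathCount π₂ (BSLAux.tTr w hw hn i)) ∈ IterSet L w)
    show socProd w (fun i => countOcc π₁ (BSLAux.tTr w hw hn i)) ∈ L
      ↔ socProd w (fun i => countOcc π₂ (BSLAux.tTr w hw hn i)) ∈ L
    rw [← hl₁, ← hl₂, heq]
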